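/- The map F = (x²y⁶ + 2xy², xy³ + 1/y), defined on the open set {(x,y) : y ≠ 0} ⊆ ℝ², has Jacobian determinant equal to a nonzero constant yet is not injective: F(1,1) = F(−3,−1). -/

import Mathlib

theorem keller_rational_not_injective (F : ℝ × ℝ → ℝ × ℝ)
    (hF : ∀ p : ℝ × ℝ, F p = (p.1 ^ 2 * p.2 ^ 6 + 2 * p.1 * p.2 ^ 2,
      p.1 * p.2 ^ 3 + 1 / p.2)) :
    F (1, 1) = (3, 2) ∧ F (-3, -1) = (3, 2) ∧
      ∀ x y : ℝ, y ≠ 0 →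
        deriv (fun s => s ^ 2 * y ^ 6 + 2 * s * y ^ 2) x *
            deriv (fun s => x * s ^ 3 + 1 / s) y -
          deriv (fun s => x ^ 2 * s ^ 6 + 2 * x * s ^ 2) y *
            deriv (fun s => s * y ^ 3 + 1 / y) x = -2 := by
  refine ⟨by rw [hF]; norm_num, by rw [hF]; norm_num, ?_⟩
  intro x y hy
  have h1 : deriv (fun s : ℝ => s ^ 2 * y ^ 6 + 2 * s * y ^ 2) x
      = 2 * x * y ^ 6 + 2 * y ^ 2 := by
    have : HasDerivAt (fun s : ℝ => s ^ 2 * y ^ 6 + 2 * s * y ^ 2)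
        (2 * x * y ^ 6 + 2 * y ^ 2) x := by
      have : HasDerivAt (fun s : ℝ => s ^ 2 * y ^ 6 + 2 * s * y ^ 2) _ x := (((hasDerivAt_pow 2 x).mul_const (y ^ 6)).add
        (((hasDerivAt_id x).const_mul 2).mul_const (y ^ 2)))
      simpa [mul_comm, mul_assoc, mul_left_comm] using this
    exact this.deriv
  have h2 : deriv (fun s : ℝ => x * s ^ 3 + 1 / s) y
      = x * (3 * y ^ 2) - 1 / y ^ 2 := by
    have : HasDerivAt (fun s : ℝ => x * s ^ 3 + 1 / s)
        (x * (3 * y ^ 2) - 1 / y ^ 2) y := by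
      have hp := (hasDerivAt_pow 3 y).const_mul x
      have hinv : HasDerivAt (fun s : ℝ => 1 / s) (-(1 / y ^ 2)) y := by
        simpa [one_div] using (hasDerivAt_inv hy)
      have : HasDerivAt (fun s : ℝ => x * s ^ 3 + 1 / s) _ y := hp.add hinv
      convert this using 1
      try push_cast; ring
    exact this.deriv
  have h3 : deriv (fun s : ℝ => x ^ 2 * s ^ 6 + 2 * x * s ^ 2) y
      = x ^ 2 * (6 * y ^ 5) + 2 * x * (2 * y) := by
    have : HasDerivAt (fun s : ℝ => x ^ 2 * s ^ 6 + 2 * x * s ^ 2)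
        (x ^ 2 * (6 * y ^ 5) + 2 * x * (2 * y)) y := by
      have : HasDerivAt (fun s : ℝ => x ^ 2 * s ^ 6 + 2 * x * s ^ 2) _ y := ((hasDerivAt_pow 6 y).const_mul (x ^ 2)).add
        ((hasDerivAt_pow 2 y).const_mul (2 * x))
      convert this using 1
      try push_cast; ring
    exact this.deriv
  have h4 : deriv (fun s : ℝ => s * y ^ 3 + 1 / y) x = y ^ 3 := by
    have : HasDerivAt (fun s : ℝ => s * y ^ 3 + 1 / y) (y ^ 3) x := by
      simpa using ((hasDerivAt_id x).mul_const (y ^ 3)).add_const (1 / y)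
    exact this.deriv
  rw [h1, h2, h3, h4]
  field_simp
  ring
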